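/- Let s ≥ 1 and let a, b : Fin s → ℕ with a ≠ b and ∑_{i : a_i < b_i} a_i > 1. Then there exist positive reals k_1,…,k_s, l_1,…,l_s, κ and two distinct points x, x' in the open positive orthant of ℝ^s such that f(x) = 0, f(x') = 0, and the s×s Jacobian matrix (∂f_i/∂z_j) of f is invertible at both x and x', where f_i(z) = k_i − l_i z_i + κ((b_i : ℝ) − (a_i : ℝ)) ∏_j z_j^{a_j}. -/

import Mathlib

/-- The mass-action steady-state map of the fully open network
`{0 ⇄ X_i (1 ≤ i ≤ s), ∑ a_i X_i → ∑ b_i X_i}` with one irreversible non-flow reaction. -/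
noncomputable def irrevSteadyStateMap (s : ℕ) (a b : Fin s → ℕ) (k l : Fin s → ℝ) (κ : ℝ)
    (z : Fin s → ℝ) (i : Fin s) : ℝ :=
  k i - l i * z i + κ * ((b i : ℝ) - (a i : ℝ)) * ∏ j, z j ^ (a j)

/-- The Jacobian matrix `(∂f_i/∂z_j)` of the steady-state map at a point `x`. -/
noncomputable def irrevJacobian (s : ℕ) (a b : Fin s → ℕ) (k l : Fin s → ℝ) (κ : ℝ)
    (x : Fin s → ℝ) : Matrix (Fin s) (Fin s) ℝ :=
  Matrix.of fun i j =>
    deriv (fun t => irrevSteadyStateMap s a b k l κ (Function.update x j t) i) (x j)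


/-- Upper Bernoulli-type bound: `(1+e)^n ≤ 1 + 2ne` when `ne ≤ 1/2`. -/
lemma irrev_bern_upper {e : ℝ} (he : 0 ≤ e) : ∀ n : ℕ, (n : ℝ) * e ≤ 1/2 → (1 + e) ^ n ≤ 1 + 2 * n * e := by
  intro n
  induction n with
  | zero => simp
  | succ m ih =>
    intro h
    have hm : (m : ℝ) * e ≤ 1/2 := by
      have : (m:ℝ) ≤ (m+1:ℕ) := by push_cast; linarith
      nlinarith [he]
    have h2 : (1 + e) ^ m ≤ 1 + 2 * m * e := ih hm
    have hpos : (0:ℝ) ≤ 1 + e := by linarith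
    have hps : (1 + e) ^ (m + 1) = (1 + e) ^ m * (1 + e) := pow_succ _ _
    rw [hps]
    have hme : 2 * (m:ℝ) * e ≤ 1 := by
      have : (m:ℝ) ≤ (m+1:ℕ) := by push_cast; linarith
      push_cast at h ⊢
      nlinarith
    push_cast
    nlinarith [mul_le_mul_of_nonneg_right h2 hpos, sq_nonneg e]

lemma irrev_nat_add_two_le_two_pow {M : ℕ} (hM : 2 ≤ M) : M + 2 ≤ 2 ^ M := by
  induction M with
  | zero => omega
  | succ m ih =>
    rcases Nat.lt_or_ge m 2 with h | h
    · interval_cases m <;> simp_all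
    · have h1 := ih h
      have h2 : 2 ^ (m+1) = 2 * 2^m := by ring
      omega

/-- Determinant-lemma based invertibility of a diagonal plus rank-one matrix. -/
lemma irrev_isUnit_diag_add_mul {n : ℕ} (d u v : Fin n → ℝ) (hd : ∀ i, d i ≠ 0)
    (h : 1 + ∑ j, v j * (u j / d j) ≠ 0) :
    IsUnit (Matrix.of (fun i j => (if i = j then d i else 0) + u i * v j) :
      Matrix (Fin n) (Fin n) ℝ) := by
  have hfac : (Matrix.of (fun i j => (if i = j then d i else 0) + u i * v j) :
      Matrix (Fin n) (Fin n) ℝ)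
      = Matrix.diagonal d *
        (1 + Matrix.replicateCol Unit (fun i => u i / d i) * Matrix.replicateRow Unit v) := by
    ext i j
    rw [Matrix.mul_apply]
    simp only [Matrix.add_apply, Matrix.one_apply, Matrix.replicateCol_apply, Matrix.replicateRow_apply,
      Matrix.mul_apply, Finset.sum_const, Finset.card_univ, Fintype.card_unit, one_smul,
      Matrix.diagonal_apply, Matrix.of_apply]
    rw [Finset.sum_eq_single i]
    · have hdi := hd i
      simp only [if_pos rfl]
      rcases eq_or_ne i j with rfl | hij
      · simp [mul_add, div_mul_eq_mul_div, mul_div_assoc, hd i]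
        field_simp
      · simp [hij, mul_add]
        field_simp
    · intro m _ hm
      rw [if_neg (fun hcon => hm hcon.symm), zero_mul]
    · simp
  rw [hfac]
  rw [Matrix.isUnit_iff_isUnit_det, Matrix.det_mul, Matrix.det_diagonal,
    Matrix.det_one_add_replicateCol_mul_replicateRow]
  rw [isUnit_iff_ne_zero]
  apply mul_ne_zero
  · exact Finset.prod_ne_zero_iff.2 fun i _ => hd i
  · convert h using 2
    rfl

lemma irrevJacobian_eq (s : ℕ) (a b : Fin s → ℕ) (k l : Fin s → ℝ) (κ : ℝ) (x : Fin s → ℝ) :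
    irrevJacobian s a b k l κ x = Matrix.of fun i j =>
      (if i = j then -(l i) else 0) +
        (κ * ((b i : ℝ) - (a i : ℝ))) *
          ((a j : ℝ) * x j ^ (a j - 1) * ∏ m ∈ Finset.univ.erase j, x m ^ a m) := by
  funext i j
  show deriv (fun t => irrevSteadyStateMap s a b k l κ (Function.update x j t) i) (x j) = _
  have hprod : ∀ t : ℝ, ∏ m, (Function.update x j t m) ^ a m
      = t ^ a j * ∏ m ∈ Finset.univ.erase j, x m ^ a m := by
    intro t
    have h1 : ∀ m : Fin s, (Function.update x j t m) ^ a m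
        = Function.update (fun m => x m ^ a m) j (t ^ a j) m := by
      intro m
      rcases eq_or_ne m j with rfl | hm
      · simp
      · simp [Function.update_of_ne hm]
    rw [Finset.prod_congr rfl (fun m _ => h1 m), Finset.prod_update_of_mem (Finset.mem_univ j),
      Finset.erase_eq]
  set Q : ℝ := ∏ m ∈ Finset.univ.erase j, x m ^ a m with hQ
  set C : ℝ := κ * ((b i : ℝ) - (a i : ℝ)) with hC
  have hp : HasDerivAt (fun t : ℝ => t ^ a j) ((a j : ℝ) * x j ^ (a j - 1)) (x j) :=
    hasDerivAt_pow _ _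
  rcases eq_or_ne i j with rfl | hij
  · have hfun : (fun t => irrevSteadyStateMap s a b k l κ (Function.update x i t) i)
        = fun t => k i - l i * t + C * (t ^ a i * Q) := by
      funext t
      rw [irrevSteadyStateMap, hprod t, Function.update_self]
    have hD : HasDerivAt (fun t : ℝ => k i - l i * t + C * (t ^ a i * Q))
        (-(l i) + C * ((a i : ℝ) * x i ^ (a i - 1) * Q)) (x i) := by
      have h2 := ((hasDerivAt_const (x i) (k i)).sub ((hasDerivAt_id (x i)).const_mul (l i))).add
        ((hp.mul_const Q).const_mul C)
      exact h2.congr_deriv (by ring)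
    rw [hfun, hD.deriv]
    simp [hC, hQ]
  · have hfun : (fun t => irrevSteadyStateMap s a b k l κ (Function.update x j t) i)
        = fun t => k i - l i * x i + C * (t ^ a j * Q) := by
      funext t
      rw [irrevSteadyStateMap, hprod t, Function.update_of_ne hij]
    have hD : HasDerivAt (fun t : ℝ => k i - l i * x i + C * (t ^ a j * Q))
        (0 + C * ((a j : ℝ) * x j ^ (a j - 1) * Q)) (x j) := by
      have h2 := (hasDerivAt_const (x j) (k i - l i * x i)).add ((hp.mul_const Q).const_mul C)
      exact h2
    rw [hfun, hD.deriv]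
    simp only [Matrix.of_apply, if_neg hij]
    rfl

lemma irrev_v_eq_div (s : ℕ) (a : Fin s → ℕ) (x : Fin s → ℝ) (j : Fin s) (hx : x j ≠ 0) :
    (a j : ℝ) * x j ^ (a j - 1) * ∏ m ∈ Finset.univ.erase j, x m ^ a m
      = (a j : ℝ) * (∏ m, x m ^ a m) / x j := by
  rcases Nat.eq_zero_or_pos (a j) with h | h
  · simp [h]
  have h1 : ∏ m, x m ^ a m = x j ^ a j * ∏ m ∈ Finset.univ.erase j, x m ^ a m :=
    (Finset.mul_prod_erase Finset.univ _ (Finset.mem_univ j)).symm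
  have h2 : x j ^ a j = x j ^ (a j - 1) * x j := by
    rw [← pow_succ]
    congr 1
    omega
  rw [h1, h2]
  field_simp

set_option maxHeartbeats 1600000 in
/-- If `∑_{i : a_i < b_i} a_i > 1`, then the irreversible one-reaction fully open network
admits multiple positive nondegenerate mass-action steady states. -/
theorem irrev_multistationary_nondegenerate (s : ℕ) (hs : 1 ≤ s) (a b : Fin s → ℕ)
    (hab : a ≠ b) (hcond : 1 < ∑ i ∈ Finset.univ.filter (fun i => a i < b i), a i) :
    ∃ (k l : Fin s → ℝ) (κ : ℝ) (x x' : Fin s → ℝ),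
      (∀ i, 0 < k i) ∧ (∀ i, 0 < l i) ∧ 0 < κ ∧
      (∀ i, 0 < x i) ∧ (∀ i, 0 < x' i) ∧ x ≠ x' ∧
      (∀ i, irrevSteadyStateMap s a b k l κ x i = 0) ∧
      (∀ i, irrevSteadyStateMap s a b k l κ x' i = 0) ∧
      IsUnit (irrevJacobian s a b k l κ x) ∧
      IsUnit (irrevJacobian s a b k l κ x') := by
  classical
  obtain ⟨M, hMdef⟩ : ∃ M : ℕ, M = ∑ i ∈ Finset.univ.filter (fun i => a i < b i), a i := ⟨_, rfl⟩
  obtain ⟨N, hNdef⟩ : ∃ N : ℕ, N = ∑ i ∈ Finset.univ.filter (fun i => b i < a i), a i := ⟨_, rfl⟩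
  obtain ⟨P, hPdef⟩ : ∃ P : ℝ, P = (2:ℝ) ^ M := ⟨_, rfl⟩
  obtain ⟨E, hEdef⟩ : ∃ E : ℝ, E = 1 / (P * ((N:ℝ) + 1) * ((M:ℝ) + 1) * 4) := ⟨_, rfl⟩
  obtain ⟨P', hP'def⟩ : ∃ P' : ℝ, P' = (1 + E) ^ N := ⟨_, rfl⟩
  rw [← hMdef] at hcond
  -- basic numeric facts
  have hM2 : 2 ≤ M := hcond
  have hM2R : (2:ℝ) ≤ (M:ℝ) := by exact_mod_cast hM2
  have hN0 : (0:ℝ) ≤ (N:ℝ) := Nat.cast_nonneg _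
  have hP0 : (0:ℝ) < P := by rw [hPdef]; positivity
  have hP4 : (4:ℝ) ≤ P := by
    rw [hPdef]
    calc (4:ℝ) = 2^2 := by norm_num
    _ ≤ 2^M := pow_le_pow_right₀ (by norm_num) hM2
  have hMP : (M:ℝ) + 2 ≤ P := by
    rw [hPdef]
    have h1 := irrev_nat_add_two_le_two_pow hM2
    have h2 : ((M + 2 : ℕ) : ℝ) ≤ ((2 ^ M : ℕ) : ℝ) := by exact_mod_cast h1
    push_cast at h2
    linarith
  have hden : (0:ℝ) < P * ((N:ℝ) + 1) * ((M:ℝ) + 1) * 4 := by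
    have h1 : (0:ℝ) < (N:ℝ) + 1 := by linarith
    have h2 : (0:ℝ) < (M:ℝ) + 1 := by linarith
    have := mul_pos (mul_pos (mul_pos hP0 h1) h2) (by norm_num : (0:ℝ) < 4)
    linarith
  have hE0 : 0 < E := by rw [hEdef]; exact div_pos one_pos hden
  have hEid : E * (P * ((N:ℝ) + 1) * ((M:ℝ) + 1) * 4) = 1 := by
    rw [hEdef]; exact one_div_mul_cancel hden.ne'
  have hD2N : 2 * (N:ℝ) ≤ P * ((N:ℝ) + 1) * ((M:ℝ) + 1) * 4 := by
    nlinarith [mul_nonneg (mul_nonneg (by linarith : (0:ℝ) ≤ P - 4)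
        (by linarith : (0:ℝ) ≤ (N:ℝ) + 1)) (by linarith : (0:ℝ) ≤ (M:ℝ) + 1),
      mul_nonneg (by linarith : (0:ℝ) ≤ (N:ℝ) + 1) (by linarith : (0:ℝ) ≤ (M:ℝ) - 2)]
  have hNE : (N:ℝ) * E ≤ 1/2 := by
    have := mul_le_mul_of_nonneg_right hD2N hE0.le
    rw [mul_comm (P * ((N:ℝ) + 1) * ((M:ℝ) + 1) * 4) E, hEid] at this
    linarith
  have h4PN : 4 * (P * (N:ℝ)) ≤ P * ((N:ℝ) + 1) * ((M:ℝ) + 1) * 4 := by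
    nlinarith [mul_nonneg (mul_nonneg hP0.le (by linarith : (0:ℝ) ≤ (N:ℝ) + 1))
        (by linarith : (0:ℝ) ≤ (M:ℝ) - 2), mul_nonneg hP0.le hN0]
  have hPNE : P * ((N:ℝ) * E) ≤ 1/4 := by
    have := mul_le_mul_of_nonneg_right h4PN hE0.le
    rw [mul_comm (P * ((N:ℝ) + 1) * ((M:ℝ) + 1) * 4) E, hEid] at this
    nlinarith
  have hPN4 : 4 * (N:ℝ) + 4 ≤ P * ((N:ℝ) + 1) := by
    nlinarith [mul_nonneg (by linarith : (0:ℝ) ≤ P - 4) (by linarith : (0:ℝ) ≤ (N:ℝ) + 1)]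
  have h16NM : 16 * ((N:ℝ) * ((M:ℝ) + 1)) ≤ P * ((N:ℝ) + 1) * ((M:ℝ) + 1) * 4 := by
    nlinarith [mul_le_mul_of_nonneg_right hPN4 (by linarith : (0:ℝ) ≤ (M:ℝ) + 1)]
  have hNEM : 2 * ((N:ℝ) * E) * ((M:ℝ) + 1) ≤ 1/8 := by
    have := mul_le_mul_of_nonneg_right h16NM hE0.le
    rw [mul_comm (P * ((N:ℝ) + 1) * ((M:ℝ) + 1) * 4) E, hEid] at this
    nlinarith
  have hNE16 : (N:ℝ) * E ≤ 1/16 := by nlinarith [mul_nonneg hN0 hE0.le]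
  have hP'1 : 1 ≤ P' := by rw [hP'def]; exact one_le_pow₀ (by linarith)
  have hP'ub : P' ≤ 1 + 2 * (N:ℝ) * E := by rw [hP'def]; exact irrev_bern_upper hE0.le N hNE
  have hP'98 : P' ≤ 9/8 := by nlinarith
  have hPP' : 0 < P - P' := by nlinarith
  -- cast bounds
  have hcub : ∀ i, a i < b i → (1:ℝ) ≤ (b i : ℝ) - (a i : ℝ) := by
    intro i h
    have h1 : (a i + 1 : ℕ) ≤ b i := h
    have h2 : ((a i + 1 : ℕ) : ℝ) ≤ ((b i : ℕ) : ℝ) := by exact_mod_cast h1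
    push_cast at h2
    linarith
  have hcub' : ∀ i, b i < a i → (1:ℝ) ≤ (a i : ℝ) - (b i : ℝ) := by
    intro i h
    have h1 : (b i + 1 : ℕ) ≤ a i := h
    have h2 : ((b i + 1 : ℕ) : ℝ) ≤ ((a i : ℕ) : ℝ) := by exact_mod_cast h1
    push_cast at h2
    linarith
  -- the two steady states
  obtain ⟨X, hXdef⟩ : ∃ X : Fin s → ℝ, X = fun i => if a i < b i then 2 else 1 := ⟨_, rfl⟩
  obtain ⟨Y, hYdef⟩ : ∃ Y : Fin s → ℝ, Y = fun i => if b i < a i then 1 + E else 1 := ⟨_, rfl⟩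
  obtain ⟨L, hLdef⟩ : ∃ L : Fin s → ℝ, L = fun i =>
      if a i < b i then ((b i : ℝ) - (a i : ℝ)) * (P - P')
      else if b i < a i then ((a i : ℝ) - (b i : ℝ)) * (P - P') / E
      else 1 := ⟨_, rfl⟩
  obtain ⟨K, hKdef⟩ : ∃ K : Fin s → ℝ,
      K = fun i => L i * X i - ((b i : ℝ) - (a i : ℝ)) * P := ⟨_, rfl⟩
  -- products
  have hPX : ∏ j, X j ^ a j = P := by
    rw [hPdef]
    simp only [hXdef]
    calc ∏ j, (if a j < b j then (2:ℝ) else 1) ^ a j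
        = ∏ j, (if a j < b j then (2:ℝ) ^ a j else 1) := by
          refine Finset.prod_congr rfl fun j _ => ?_
          split_ifs <;> simp
      _ = ∏ j ∈ Finset.univ.filter (fun j => a j < b j), (2:ℝ) ^ a j := by
          rw [Finset.prod_filter]
      _ = (2:ℝ) ^ M := by rw [Finset.prod_pow_eq_pow_sum, hMdef]
  have hPY : ∏ j, Y j ^ a j = P' := by
    rw [hP'def]
    simp only [hYdef]
    calc ∏ j, (if b j < a j then 1 + E else 1) ^ a j
        = ∏ j, (if b j < a j then (1 + E) ^ a j else 1) := by
          refine Finset.prod_congr rfl fun j _ => ?_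
          split_ifs <;> simp
      _ = ∏ j ∈ Finset.univ.filter (fun j => b j < a j), (1 + E) ^ a j := by
          rw [Finset.prod_filter]
      _ = (1 + E) ^ N := by rw [Finset.prod_pow_eq_pow_sum, hNdef]
  -- positivity of L
  have hL0 : ∀ i, 0 < L i := by
    intro i
    simp only [hLdef]
    rcases lt_trichotomy (a i) (b i) with h | h | h
    · simp only [if_pos h]
      have := hcub i h
      nlinarith
    · simp only [if_neg (by omega : ¬ a i < b i), if_neg (by omega : ¬ b i < a i)]
      norm_num
    · simp only [if_neg (by omega : ¬ a i < b i), if_pos h]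
      have := hcub' i h
      positivity
  -- positivity of K
  have hK0 : ∀ i, 0 < K i := by
    intro i
    simp only [hKdef]
    rcases lt_trichotomy (a i) (b i) with h | h | h
    · rw [hLdef, hXdef]
      simp only [if_pos h]
      have := hcub i h
      nlinarith
    · rw [hLdef, hXdef]
      simp only [if_neg (by omega : ¬ a i < b i), if_neg (by omega : ¬ b i < a i)]
      rw [h]
      norm_num
    · rw [hLdef, hXdef]
      simp only [if_neg (by omega : ¬ a i < b i), if_pos h]
      have h1 := hcub' i h
      have h2 : 0 < ((a i : ℝ) - (b i : ℝ)) * (P - P') / E := by positivity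
      nlinarith
  refine ⟨K, L, 1, X, Y, hK0, hL0, one_pos, ?_, ?_, ?_, ?_, ?_, ?_, ?_⟩
  · intro i
    simp only [hXdef]
    split_ifs <;> norm_num
  · intro i
    simp only [hYdef]
    split_ifs <;> norm_num
    linarith
  · -- X ≠ Y
    have hne : (Finset.univ.filter (fun i => a i < b i)).Nonempty := by
      by_contra hc
      rw [Finset.not_nonempty_iff_eq_empty] at hc
      rw [hMdef, hc, Finset.sum_empty] at hM2
      omega
    obtain ⟨i, hi⟩ := hne
    have h : a i < b i := (Finset.mem_filter.1 hi).2
    intro heq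
    have := congrFun heq i
    simp only [hXdef, hYdef] at this
    simp only [if_pos h, if_neg (by omega : ¬ b i < a i)] at this
    norm_num at this
  · -- steady state at X
    intro i
    rw [irrevSteadyStateMap, hPX]
    simp only [hKdef]
    ring
  · -- steady state at Y
    intro i
    rw [irrevSteadyStateMap, hPY]
    simp only [hKdef]
    rcases lt_trichotomy (a i) (b i) with h | h | h
    · simp only [hLdef, hXdef, hYdef]
      simp only [if_pos h, if_neg (by omega : ¬ b i < a i)]
      ring
    · have h1 : ¬ a i < b i := by omega
      have h2 : ¬ b i < a i := by omega
      simp only [hLdef, hXdef, hYdef, if_neg h1, if_neg h2, h]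
      ring
    · simp only [hLdef, hXdef, hYdef]
      simp only [if_neg (by omega : ¬ a i < b i), if_pos h]
      field_simp
      ring
  · -- Jacobian at X
    rw [irrevJacobian_eq]
    apply irrev_isUnit_diag_add_mul (fun i => -(L i))
      (fun i => (1:ℝ) * ((b i : ℝ) - (a i : ℝ)))
      (fun j => (a j : ℝ) * X j ^ (a j - 1) * ∏ m ∈ Finset.univ.erase j, X m ^ a m)
      (fun i => by have := hL0 i; simp; linarith)
    -- sum computation
    have hterm : ∀ j ∈ Finset.univ, ((a j : ℝ) * X j ^ (a j - 1) *
          ∏ m ∈ Finset.univ.erase j, X m ^ a m) *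
          ((1 * ((b j : ℝ) - (a j : ℝ))) / (-(L j)))
        = (if a j < b j then (a j : ℝ) else 0) * (-(P / (2 * (P - P'))))
          + (if b j < a j then (a j : ℝ) else 0) * (P * E / (P - P')) := by
      intro j _
      have hXj : X j ≠ 0 := by
        simp only [hXdef]; split_ifs <;> norm_num
      rw [irrev_v_eq_div s a X j hXj, hPX]
      rcases lt_trichotomy (a j) (b j) with h | h | h
      · simp only [hLdef, hXdef]
        simp only [if_pos h, if_neg (by omega : ¬ b j < a j), add_zero, one_mul]
        have hc := hcub j h
        have hc0 : (b j : ℝ) - (a j : ℝ) ≠ 0 := by linarith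
        field_simp
        ring
      · rw [h]
        simp only [hLdef, hXdef]
        simp only [if_neg (by omega : ¬ b j < b j), sub_self]
        ring
      · simp only [hLdef, hXdef]
        simp only [if_neg (by omega : ¬ a j < b j), if_pos h]
        have hc := hcub' j h
        have hc0 : (a j : ℝ) - (b j : ℝ) ≠ 0 := by linarith
        have hEne : E ≠ 0 := hE0.ne'
        have hPPne : P - P' ≠ 0 := hPP'.ne'
        field_simp
        ring
    rw [Finset.sum_congr rfl hterm, Finset.sum_add_distrib, ← Finset.sum_mul, ← Finset.sum_mul,
      ← Finset.sum_filter, ← Finset.sum_filter, ← Nat.cast_sum, ← Nat.cast_sum,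
      ← hMdef, ← hNdef]
    have hval : 1 + ((M:ℝ) * (-(P / (2 * (P - P')))) + (N:ℝ) * (P * E / (P - P')))
        = (2 * (P - P') - (M:ℝ) * P + 2 * ((N:ℝ) * (P * E))) / (2 * (P - P')) := by
      field_simp
      ring
    rw [hval]
    have hnum : 2 * (P - P') - (M:ℝ) * P + 2 * ((N:ℝ) * (P * E)) < 0 := by
      have h1 : (M:ℝ) * P ≥ 2 * P := by nlinarith
      have h2 : (N:ℝ) * (P * E) ≤ 1/4 := by nlinarith
      nlinarith
    exact ne_of_lt (div_neg_of_neg_of_pos hnum (by linarith))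
  · -- Jacobian at Y
    rw [irrevJacobian_eq]
    apply irrev_isUnit_diag_add_mul (fun i => -(L i))
      (fun i => (1:ℝ) * ((b i : ℝ) - (a i : ℝ)))
      (fun j => (a j : ℝ) * Y j ^ (a j - 1) * ∏ m ∈ Finset.univ.erase j, Y m ^ a m)
      (fun i => by have := hL0 i; simp; linarith)
    have hterm : ∀ j ∈ Finset.univ, ((a j : ℝ) * Y j ^ (a j - 1) *
          ∏ m ∈ Finset.univ.erase j, Y m ^ a m) *
          ((1 * ((b j : ℝ) - (a j : ℝ))) / (-(L j)))
        = (if a j < b j then (a j : ℝ) else 0) * (-(P' / (P - P')))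
          + (if b j < a j then (a j : ℝ) else 0) * (P' * E / ((1 + E) * (P - P'))) := by
      intro j _
      have hYj : Y j ≠ 0 := by
        simp only [hYdef]; split_ifs <;> [positivity; norm_num]
      rw [irrev_v_eq_div s a Y j hYj, hPY]
      rcases lt_trichotomy (a j) (b j) with h | h | h
      · simp only [hLdef, hYdef]
        simp only [if_pos h, if_neg (by omega : ¬ b j < a j), add_zero, one_mul]
        have hc := hcub j h
        have hc0 : (b j : ℝ) - (a j : ℝ) ≠ 0 := by linarith
        field_simp
        ring
      · rw [h]
        simp only [hLdef, hYdef]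
        simp only [if_neg (by omega : ¬ b j < b j), sub_self]
        ring
      · simp only [hLdef, hYdef]
        simp only [if_neg (by omega : ¬ a j < b j), if_pos h]
        have hc := hcub' j h
        have hc0 : (a j : ℝ) - (b j : ℝ) ≠ 0 := by linarith
        have hEne : E ≠ 0 := hE0.ne'
        have hPPne : P - P' ≠ 0 := hPP'.ne'
        have h1E : (1:ℝ) + E ≠ 0 := by linarith
        field_simp
        ring
    rw [Finset.sum_congr rfl hterm, Finset.sum_add_distrib, ← Finset.sum_mul, ← Finset.sum_mul,
      ← Finset.sum_filter, ← Finset.sum_filter, ← Nat.cast_sum, ← Nat.cast_sum,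
      ← hMdef, ← hNdef]
    have h1E : (0:ℝ) < 1 + E := by linarith
    have hval : 1 + ((M:ℝ) * (-(P' / (P - P'))) + (N:ℝ) * (P' * E / ((1 + E) * (P - P'))))
        = ((1 + E) * (P - P') - (M:ℝ) * P' * (1 + E) + (N:ℝ) * (P' * E))
          / ((1 + E) * (P - P')) := by
      field_simp
      ring
    rw [hval]
    have hnum : 0 < (1 + E) * (P - P') - (M:ℝ) * P' * (1 + E) + (N:ℝ) * (P' * E) := by
      have hkey : P' * ((M:ℝ) + 1) ≤ P - 7/8 := by nlinarith
      have h2 : 0 ≤ (N:ℝ) * (P' * E) := by positivity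
      nlinarith
    exact (div_pos hnum (mul_pos (by linarith : (0:ℝ) < 1 + E) hPP')).ne'
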